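/- arXiv:2012.09541 — 2 statements merged into one kernel-verified Lean document; each statement's English description precedes it below -/
import Mathlib

section
/- For every hiring problem (W, M, s, m) and every sequence of hires λ = ⟨q₁,…,q_t⟩ with total quota q = q₁+⋯+q_t ≤ |W|, the set φ^SM(W,λ) selected by the sequential use of minority reserves rule respects minority rights for quota q. -/
open Finset

variable {ι : Type*} [DecidableEq ι]

/-- The (up to) `k` highest-scoring elements of `X`, chosen greedily
(with injective scores this is the set of the `k` highest-scoring elements). -/
noncomputable def topOf (s : ι → ℝ) : ℕ → Finset ι → Finset ι
  | 0, _ => ∅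
  | k + 1, X =>
    if h : X.Nonempty then
      insert (X.exists_max_image s h).choose
        (topOf s k (X.erase (X.exists_max_image s h).choose))
    else ∅

/-- `H` respects minority rights for quota `q` (w.r.t. minorities `M` and ratio `m`):
either `|M| ≥ m·q` and the fraction of minorities in `H` is at least `m`
(stated multiplicatively as `ω(H) ≥ m·|H|`), or `|M| < m·q` and `M ⊆ H`. -/
def RespectsRightsSet (M : Finset ι) (m : ℝ) (q : ℕ) (H : Finset ι) : Prop :=
  (m * (q : ℝ) ≤ (M.card : ℝ) ∧ m * (H.card : ℝ) ≤ ((H ∩ M).card : ℝ)) ∨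
  ((M.card : ℝ) < m * (q : ℝ) ∧ M ⊆ H)

/-- `H` is minority fair (w.r.t. workers `W`, minorities `M`, scores `s`, ratio `m`):
(i) within `M` and within `W ∖ M` selection follows the scores; (ii) no minority with a
higher score is left out while a non-minority is hired; (iii) a lower-scoring minority is
hired over a higher-scoring non-minority only if the minority fraction of `H` is at most
`m` (stated multiplicatively as `ω(H) ≤ m·|H|`). -/
def MinorityFairSet (W M : Finset ι) (s : ι → ℝ) (m : ℝ) (H : Finset ι) : Prop :=
  (∀ w ∈ M, ∀ w' ∈ M, w ∈ H → w' ∉ H → s w' < s w) ∧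
  (∀ w ∈ W \ M, ∀ w' ∈ W \ M, w ∈ H → w' ∉ H → s w' < s w) ∧
  (∀ w ∈ W \ M, ∀ w' ∈ M, s w < s w' → w ∈ H → w' ∈ H) ∧
  ((∃ w ∈ W \ M, ∃ w' ∈ M, s w' < s w ∧ w ∉ H ∧ w' ∈ H) →
    ((H ∩ M).card : ℝ) ≤ m * (H.card : ℝ))

/-- One round of the minority reserves choice from pool `P`: the `min(⌈m·q⌉, |M ∩ P|)`
highest-scoring available minority workers, then the highest-scoring remaining available
workers filling up to `q` hires in total. -/
noncomputable def smRound (M : Finset ι) (s : ι → ℝ) (m : ℝ) (P : Finset ι) (q : ℕ) :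
    Finset ι :=
  let A1 := topOf s (min ⌈m * (q : ℝ)⌉₊ (P ∩ M).card) (P ∩ M)
  A1 ∪ topOf s (q - A1.card) (P \ A1)

/-- The sequential use of minority reserves rule `φ^SM`. -/
noncomputable def phiSM (M : Finset ι) (s : ι → ℝ) (m : ℝ) : Finset ι → List ℕ → Finset ι
  | _, [] => ∅
  | P, q :: rest => smRound M s m P q ∪ phiSM M s m (P \ smRound M s m P q) rest

lemma topOf_subset (s : ι → ℝ) : ∀ k X, topOf s k X ⊆ X := by
  intro k
  induction k with
  | zero => intro X; simp [topOf]
  | succ k ih =>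
    intro X
    rw [topOf]
    split_ifs with h
    · intro x hx
      rcases mem_insert.1 hx with rfl | hx
      · exact (X.exists_max_image s h).choose_spec.1
      · exact erase_subset _ _ (ih _ hx)
    · simp

lemma card_topOf (s : ι → ℝ) : ∀ k X, (topOf s k X).card = min k X.card := by
  intro k
  induction k with
  | zero => intro X; simp [topOf]
  | succ k ih =>
    intro X
    rw [topOf]
    split_ifs with h
    · have hmem := (X.exists_max_image s h).choose_spec.1
      have hnot : (X.exists_max_image s h).choose ∉
          topOf s k (X.erase (X.exists_max_image s h).choose) := by
        intro hc
        exact (notMem_erase _ _) (topOf_subset s _ _ hc)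
      rw [card_insert_of_notMem hnot, ih, card_erase_of_mem hmem]
      have : 1 ≤ X.card := card_pos.2 h
      omega
    · simp [not_nonempty_iff_eq_empty.1 h]

lemma topOf_eq_self (s : ι → ℝ) {k : ℕ} {X : Finset ι} (h : X.card ≤ k) :
    topOf s k X = X := by
  apply eq_of_subset_of_card_le (topOf_subset s k X)
  rw [card_topOf]; omega

lemma smRound_subset (M : Finset ι) (s : ι → ℝ) (m : ℝ) (P : Finset ι) (q : ℕ) :
    smRound M s m P q ⊆ P := by
  unfold smRound
  apply union_subset
  · exact (topOf_subset _ _ _).trans inter_subset_left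
  · exact (topOf_subset _ _ _).trans (sdiff_subset)

lemma ceil_le_q {m : ℝ} (hm1 : m ≤ 1) (hm0 : 0 ≤ m) (q : ℕ) : ⌈m * (q : ℝ)⌉₊ ≤ q := by
  apply Nat.ceil_le.2
  calc m * (q : ℝ) ≤ 1 * q := by
        apply mul_le_mul_of_nonneg_right hm1 (Nat.cast_nonneg q)
    _ = q := one_mul _

lemma card_smRound_le {m : ℝ} (hm0 : 0 ≤ m) (hm1 : m ≤ 1) (M : Finset ι) (s : ι → ℝ)
    (P : Finset ι) (q : ℕ) : (smRound M s m P q).card ≤ q := by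
  unfold smRound
  set A1 := topOf s (min ⌈m * (q : ℝ)⌉₊ (P ∩ M).card) (P ∩ M) with hA1
  show (A1 ∪ topOf s (q - A1.card) (P \ A1)).card ≤ q
  have hd : Disjoint A1 (topOf s (q - A1.card) (P \ A1)) :=
    disjoint_of_subset_right (topOf_subset _ _ _) disjoint_sdiff
  rw [card_union_of_disjoint hd]
  have h1 : A1.card ≤ ⌈m * (q : ℝ)⌉₊ := by rw [hA1, card_topOf]; omega
  have h2 : (topOf s (q - A1.card) (P \ A1)).card ≤ q - A1.card := by
    rw [card_topOf]; omega
  have := ceil_le_q hm1 hm0 q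
  omega

lemma card_smRound_eq {m : ℝ} (hm0 : 0 ≤ m) (hm1 : m ≤ 1) (M : Finset ι) (s : ι → ℝ)
    {P : Finset ι} {q : ℕ} (hq : q ≤ P.card) : (smRound M s m P q).card = q := by
  unfold smRound
  set A1 := topOf s (min ⌈m * (q : ℝ)⌉₊ (P ∩ M).card) (P ∩ M) with hA1
  show (A1 ∪ topOf s (q - A1.card) (P \ A1)).card = q
  have hA1P : A1 ⊆ P := (topOf_subset _ _ _).trans inter_subset_left
  have hd : Disjoint A1 (topOf s (q - A1.card) (P \ A1)) :=
    disjoint_of_subset_right (topOf_subset _ _ _) disjoint_sdiff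
  rw [card_union_of_disjoint hd]
  have h1 : A1.card ≤ ⌈m * (q : ℝ)⌉₊ := by rw [hA1, card_topOf]; omega
  have hcd : (P \ A1).card = P.card - A1.card := card_sdiff_of_subset hA1P
  have h2 : (topOf s (q - A1.card) (P \ A1)).card = q - A1.card := by
    rw [card_topOf, hcd]; omega
  have := ceil_le_q hm1 hm0 q
  omega

lemma smRound_minority {m : ℝ} (M : Finset ι) (s : ι → ℝ) {P : Finset ι} {q : ℕ}
    {w : ι} (hwM : w ∈ M) (hwP : w ∈ P) (hw : w ∉ smRound M s m P q) :
    ⌈m * (q : ℝ)⌉₊ ≤ ((smRound M s m P q) ∩ M).card := by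
  set A1 := topOf s (min ⌈m * (q : ℝ)⌉₊ (P ∩ M).card) (P ∩ M) with hA1
  have hA1sub : A1 ⊆ smRound M s m P q := by
    unfold smRound; exact subset_union_left
  have hlt : ⌈m * (q : ℝ)⌉₊ < (P ∩ M).card := by
    by_contra hge
    push_neg at hge
    have : A1 = P ∩ M := topOf_eq_self s (by omega)
    exact hw (hA1sub (this ▸ mem_inter.2 ⟨hwP, hwM⟩))
  have h1 : A1.card = ⌈m * (q : ℝ)⌉₊ := by rw [hA1, card_topOf]; omega
  have : A1 ⊆ (smRound M s m P q) ∩ M :=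
    subset_inter hA1sub ((topOf_subset _ _ _).trans inter_subset_right)
  calc ⌈m * (q : ℝ)⌉₊ = A1.card := h1.symm
    _ ≤ _ := card_le_card this

lemma phiSM_subset (M : Finset ι) (s : ι → ℝ) (m : ℝ) (lam : List ℕ) :
    ∀ P, phiSM M s m P lam ⊆ P := by
  induction lam with
  | nil => intro P; simp [phiSM]
  | cons q rest ih =>
    intro P
    rw [phiSM]
    exact union_subset (smRound_subset M s m P q) ((ih _).trans sdiff_subset)

lemma card_phiSM_eq {m : ℝ} (hm0 : 0 ≤ m) (hm1 : m ≤ 1) (M : Finset ι) (s : ι → ℝ)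
    (lam : List ℕ) : ∀ P : Finset ι, lam.sum ≤ P.card →
    (phiSM M s m P lam).card = lam.sum := by
  induction lam with
  | nil => intro P _; simp [phiSM]
  | cons q rest ih =>
    intro P hP
    rw [phiSM]
    rw [List.sum_cons] at hP
    have hq : q ≤ P.card := le_trans (Nat.le_add_right _ _) hP
    have hrc : (smRound M s m P q).card = q := card_smRound_eq hm0 hm1 M s hq
    have hd : Disjoint (smRound M s m P q) (phiSM M s m (P \ smRound M s m P q) rest) :=
      disjoint_of_subset_right (phiSM_subset _ _ _ _ _) disjoint_sdiff
    rw [card_union_of_disjoint hd, hrc, List.sum_cons]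
    have hsd : (P \ smRound M s m P q).card = P.card - q := by
      rw [card_sdiff_of_subset (smRound_subset M s m P q), hrc]
    rw [ih _ (by omega)]

lemma phiSM_minority {m : ℝ} (M : Finset ι) (s : ι → ℝ) (lam : List ℕ) :
    ∀ P : Finset ι, ∀ w, w ∈ M → w ∈ P → w ∉ phiSM M s m P lam →
    (lam.map fun q : ℕ => ⌈m * (q : ℝ)⌉₊).sum ≤ ((phiSM M s m P lam) ∩ M).card := by
  induction lam with
  | nil => intro P w _ _ _; simp [phiSM]
  | cons q rest ih =>
    intro P w hwM hwP hw
    rw [phiSM] at hw ⊢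
    rw [mem_union, not_or] at hw
    obtain ⟨hw1, hw2⟩ := hw
    have h1 : ⌈m * (q : ℝ)⌉₊ ≤ ((smRound M s m P q) ∩ M).card :=
      smRound_minority M s hwM hwP hw1
    have hwP' : w ∈ P \ smRound M s m P q := mem_sdiff.2 ⟨hwP, hw1⟩
    have h2 := ih _ w hwM hwP' hw2
    have hd : Disjoint ((smRound M s m P q) ∩ M)
        ((phiSM M s m (P \ smRound M s m P q) rest) ∩ M) :=
      Disjoint.mono inter_subset_left inter_subset_left
        (disjoint_of_subset_right (phiSM_subset _ _ _ _ _) disjoint_sdiff)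
    rw [union_inter_distrib_right, card_union_of_disjoint hd, List.map_cons, List.sum_cons]
    omega

lemma sum_ceil_ge {m : ℝ} (hm0 : 0 ≤ m) (lam : List ℕ) :
    m * (lam.sum : ℝ) ≤ (((lam.map fun q : ℕ => ⌈m * (q : ℝ)⌉₊).sum : ℕ) : ℝ) := by
  induction lam with
  | nil => simp
  | cons q rest ih =>
    rw [List.sum_cons, List.map_cons, List.sum_cons, Nat.cast_add, Nat.cast_add, mul_add]
    exact add_le_add (Nat.le_ceil _) ih

/-- For every hiring problem `(W, M, s, m)` and every sequence of hires
`λ = ⟨q₁,…,q_t⟩` with total quota `q = q₁+⋯+q_t ≤ |W|`, the set `φ^SM(W,λ)` selected by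
the sequential use of minority reserves rule respects minority rights for quota `q`. -/
theorem phiSM_respects_rights (W M : Finset ι) (s : ι → ℝ) (m : ℝ) (lam : List ℕ)
    (hMW : M ⊆ W) (hs : Set.InjOn s ↑W) (hm0 : 0 ≤ m) (hm1 : m ≤ 1)
    (hsum : lam.sum ≤ W.card) :
    RespectsRightsSet M m lam.sum (phiSM M s m W lam) := by
  set H := phiSM M s m W lam with hH
  have hHcard : H.card = lam.sum := card_phiSM_eq hm0 hm1 M s lam W hsum
  by_cases hMH : M ⊆ H
  · by_cases hle : m * (lam.sum : ℝ) ≤ (M.card : ℝ)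
    · left
      refine ⟨hle, ?_⟩
      rw [inter_eq_right.2 hMH, hHcard]
      exact hle
    · right; exact ⟨lt_of_not_ge hle, hMH⟩
  · obtain ⟨w, hwM, hwH⟩ := not_subset.1 hMH
    have key := phiSM_minority M s lam W w hwM (hMW hwM) hwH
    have key' : m * (lam.sum : ℝ) ≤ ((H ∩ M).card : ℝ) :=
      le_trans (sum_ceil_ge hm0 lam) (Nat.cast_le.2 key)
    left
    refine ⟨le_trans key' (by exact_mod_cast card_le_card inter_subset_right), ?_⟩
    rw [hHcard]; exact key'
end

section
/- Policy 1 of the French assignment rule does not respect minority rights and is not aggregation independent: (i) there exist a finite set of workers W, a subset M ⊆ W, an injective score function s, a minority ratio m with 0 ≤ m ≤ 1, and a quota q ≤ |W| with m·q an integer, such that the set φ^F1(W,⟨q⟩) does not respect minority rights for quota q; and (ii) there exist W, M, s, m and quotas q₁, q₂ with q₁+q₂ ≤ |W| and m·q₁, m·(q₁+q₂) integers, such that φ^F1(W,⟨q₁,q₂⟩) ≠ φ^F1(W,⟨q₁+q₂⟩). -/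
open Finset

variable {ι : Type*} [DecidableEq ι]

/-- One round of the adjusted minority reserves choice from pool `P`: `hired` is the
number of minority workers hired in earlier rounds, `Q` is the cumulative quota up to and
including this round, and `q` is the quota of this round.  First the
`min(max(⌈m·Q⌉ − hired, 0), |M ∩ P|)` highest-scoring available minority workers are
hired, then the highest-scoring remaining available workers fill up to `q` hires. -/
noncomputable def saRound (M : Finset ι) (s : ι → ℝ) (m : ℝ) (P : Finset ι)
    (hired Q q : ℕ) : Finset ι :=
  let A1 := topOf s (min (⌈m * (Q : ℝ)⌉₊ - hired) (P ∩ M).card) (P ∩ M)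
  A1 ∪ topOf s (q - A1.card) (P \ A1)

/-- Auxiliary recursion for the sequential adjusted minority reserves rule:
`P` is the current pool, `A` the set of previously hired workers and `Q` the cumulative
quota of previous rounds. -/
noncomputable def phiSAaux (M : Finset ι) (s : ι → ℝ) (m : ℝ) :
    Finset ι → Finset ι → ℕ → List ℕ → Finset ι
  | _, _, _, [] => ∅
  | P, A, Q, q :: rest =>
    let H := saRound M s m P ((A ∩ M).card) (Q + q) q
    H ∪ phiSAaux M s m (P \ H) (A ∪ H) (Q + q) rest

/-- The sequential adjusted minority reserves rule `φ^SA`. -/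
noncomputable def phiSA (M : Finset ι) (s : ι → ℝ) (m : ℝ) (W : Finset ι)
    (lam : List ℕ) : Finset ι :=
  phiSAaux M s m W ∅ 0 lam

/-- Policy 1 of the French assignment rule `φ^F1` (under the assumption that all workers
with disabilities take part in the open competition with the same relative ranking, so a
single score function applies): in round 1 it hires the `q₁` highest-scoring workers of
`W`; in each later round with quota `q_r`, cumulative quota `Q_r` and previously hired
set `A`, it first hires the `min(max(⌈m·Q_r⌉ − ω(A), 0), available minorities)`
highest-scoring available minority workers and then fills the rest of the round with the
highest-scoring remaining available workers. -/
noncomputable def phiF1 (M : Finset ι) (s : ι → ℝ) (m : ℝ) (W : Finset ι) :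
    List ℕ → Finset ι
  | [] => ∅
  | q :: rest =>
    topOf s q W ∪ phiSAaux M s m (W \ topOf s q W) (topOf s q W) q rest


lemma topOf_succ {s : ℕ → ℝ} {k : ℕ} {X : Finset ℕ} {a : ℕ} (ha : a ∈ X)
    (hmax : ∀ b ∈ X, b ≠ a → s b < s a) :
    topOf s (k+1) X = insert a (topOf s k (X.erase a)) := by
  have hne : X.Nonempty := ⟨a, ha⟩
  rw [topOf, dif_pos hne]
  obtain ⟨hc1, hc2⟩ := (X.exists_max_image s hne).choose_spec
  have hca : (X.exists_max_image s hne).choose = a := by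
    by_contra h
    have := hmax _ hc1 h
    have := hc2 a ha
    linarith
  rw [hca]

lemma topOf_zero {s : ℕ → ℝ} {X : Finset ℕ} : topOf s 0 X = ∅ := by rw [topOf]

noncomputable abbrev sc : ℕ → ℝ := fun w => (w : ℝ)

lemma t1 : topOf sc 2 ({0,1,2} : Finset ℕ) = {2,1} := by
  rw [topOf_succ (a := 2) (by decide) (by intro b hb hne; fin_cases hb <;> simp_all <;> norm_num),
    show ({0,1,2} : Finset ℕ).erase 2 = {0,1} by decide,
    topOf_succ (a := 1) (by decide) (by intro b hb hne; fin_cases hb <;> simp_all <;> norm_num),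
    show ({0,1} : Finset ℕ).erase 1 = {0} by decide, topOf_zero]
  decide

lemma t2 : topOf sc 2 ({0,1,2,3,4} : Finset ℕ) = {4,3} := by
  rw [topOf_succ (a := 4) (by decide) (by intro b hb hne; fin_cases hb <;> simp_all <;> norm_num),
    show ({0,1,2,3,4} : Finset ℕ).erase 4 = {0,1,2,3} by decide,
    topOf_succ (a := 3) (by decide) (by intro b hb hne; fin_cases hb <;> simp_all <;> norm_num),
    show ({0,1,2,3} : Finset ℕ).erase 3 = {0,1,2} by decide, topOf_zero]
  decide

lemma t3 : topOf sc 4 ({0,1,2,3,4} : Finset ℕ) = {4,3,2,1} := by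
  rw [topOf_succ (a := 4) (by decide) (by intro b hb hne; fin_cases hb <;> simp_all <;> norm_num),
    show ({0,1,2,3,4} : Finset ℕ).erase 4 = {0,1,2,3} by decide,
    topOf_succ (a := 3) (by decide) (by intro b hb hne; fin_cases hb <;> simp_all <;> norm_num),
    show ({0,1,2,3} : Finset ℕ).erase 3 = {0,1,2} by decide,
    topOf_succ (a := 2) (by decide) (by intro b hb hne; fin_cases hb <;> simp_all <;> norm_num),
    show ({0,1,2} : Finset ℕ).erase 2 = {0,1} by decide,
    topOf_succ (a := 1) (by decide) (by intro b hb hne; fin_cases hb <;> simp_all <;> norm_num),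
    show ({0,1} : Finset ℕ).erase 1 = {0} by decide, topOf_zero]
  decide

lemma t4 : topOf sc 1 ({0} : Finset ℕ) = {0} := by
  rw [topOf_succ (a := 0) (by decide) (by intro b hb hne; fin_cases hb <;> simp_all <;> norm_num),
    show ({0} : Finset ℕ).erase 0 = ∅ by decide, topOf_zero]
  decide

lemma t5 : topOf sc 1 ({1,2} : Finset ℕ) = {2} := by
  rw [topOf_succ (a := 2) (by decide) (by intro b hb hne; fin_cases hb <;> simp_all <;> norm_num),
    show ({1,2} : Finset ℕ).erase 2 = {1} by decide, topOf_zero]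
  decide

/-- Policy 1 of the French assignment rule does not respect minority
rights and is not aggregation independent: (i) there is a hiring problem and a quota
`q ≤ |W|` with `m·q` an integer such that `φ^F1(W,⟨q⟩)` does not respect minority rights
for quota `q`; and (ii) there is a hiring problem and quotas `q₁, q₂` with
`q₁+q₂ ≤ |W|` and `m·q₁`, `m·(q₁+q₂)` integers such that
`φ^F1(W,⟨q₁,q₂⟩) ≠ φ^F1(W,⟨q₁+q₂⟩)`. -/
theorem phiF1_not_rights_not_aggindep :
    (∃ (W M : Finset ℕ) (s : ℕ → ℝ) (m : ℝ) (q : ℕ),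
      M ⊆ W ∧ Set.InjOn s ↑W ∧ 0 ≤ m ∧ m ≤ 1 ∧ q ≤ W.card ∧
      (∃ j : ℕ, m * (q : ℝ) = (j : ℝ)) ∧
      ¬ RespectsRightsSet M m q (phiF1 M s m W [q])) ∧
    (∃ (W M : Finset ℕ) (s : ℕ → ℝ) (m : ℝ) (q₁ q₂ : ℕ),
      M ⊆ W ∧ Set.InjOn s ↑W ∧ 0 ≤ m ∧ m ≤ 1 ∧ q₁ + q₂ ≤ W.card ∧
      (∃ j : ℕ, m * (q₁ : ℝ) = (j : ℝ)) ∧ (∃ j : ℕ, m * ((q₁ + q₂ : ℕ) : ℝ) = (j : ℝ)) ∧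
      phiF1 M s m W [q₁, q₂] ≠ phiF1 M s m W [q₁ + q₂]) := by
  constructor
  · refine ⟨{0,1,2}, {0}, sc, 1/2, 2, by decide, fun a _ b _ h => Nat.cast_injective h,
      by norm_num, by norm_num, by decide, ⟨1, by norm_num⟩, ?_⟩
    have hH : phiF1 ({0}:Finset ℕ) sc (1/2) {0,1,2} [2] = {2,1} := by
      rw [phiF1, phiSAaux, union_empty, t1]
    rw [hH]
    simp only [RespectsRightsSet,
      show ({2,1}:Finset ℕ) ∩ {0} = ∅ from by decide,
      show (({2,1}:Finset ℕ)).card = 2 from by decide,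
      show (({0}:Finset ℕ)).card = 1 from by decide, card_empty]
    push_neg
    norm_num
  · refine ⟨{0,1,2,3,4}, {0}, sc, 1/2, 2, 2, by decide, fun a _ b _ h => Nat.cast_injective h,
      by norm_num, by norm_num, by decide, ⟨1, by norm_num⟩, ⟨2, by norm_num⟩, ?_⟩
    have hrhs : phiF1 ({0}:Finset ℕ) sc (1/2) {0,1,2,3,4} [2+2] = {4,3,2,1} := by
      rw [phiF1, phiSAaux, union_empty]
      exact t3
    have hsa : saRound ({0}:Finset ℕ) sc (1/2) {0,1,2} ((({4,3}:Finset ℕ) ∩ {0}).card) (2+2) 2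
        = {0,2} := by
      rw [saRound]
      simp only [show ({0,1,2}:Finset ℕ) ∩ {0} = {0} from by decide,
        show (({4,3}:Finset ℕ) ∩ {0}) = ∅ from by decide, card_empty,
        show (({0}:Finset ℕ)).card = 1 from by decide,
        show ⌈(1/2:ℝ) * (((2+2:ℕ)):ℝ)⌉₊ = 2 from by norm_num]
      norm_num [t4, t5, show ({0,1,2}:Finset ℕ) \ {0} = {1,2} from by decide]
    have hlhs : phiF1 ({0}:Finset ℕ) sc (1/2) {0,1,2,3,4} [2, 2] = {4,3,0,2} := by
      rw [phiF1, t2, show ({0,1,2,3,4}:Finset ℕ) \ {4,3} = {0,1,2} from by decide,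
        phiSAaux, hsa, phiSAaux, union_empty]
      decide
    rw [hlhs, hrhs]
    decide
end
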